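/- Nonexistence of Frobenius eigenvectors in Γ with non-unit eigenvalue: if x ∈ Γ is nonzero and λ ∈ O = W(k) satisfies σ(x) = λ·x, then λ is a unit in O (i.e., v_p(λ) = 0). Equivalently, for λ ∈ O with v_p(λ) > 0, the equation σ(x) = λ·x has no nonzero solution in Γ. -/

import Mathlib

open scoped TensorProduct
open Pointwise

/-- An `F`-crystal over `R` with respect to a Frobenius lift `σR`. -/
structure IsFCrystal (p : ℕ) (R : Type) [CommRing R] (σR : R →+* R)
    (M : Type) [AddCommGroup M] [Module R M] (F : M →+ M) : Prop where
  free : Module.Free R M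
  finite : Module.Finite R M
  injective : Function.Injective F
  semilinear : ∀ (x : R) (m : M), F (x • m) = σR x • F m
  isogeny : ∃ a : ℕ, ∀ m : M, (p : R) ^ a • m ∈ Submodule.span R (Set.range ⇑F)

/-- `(M, F)` is isoclinic of slope `s = a/b`. -/
def IsIsoclinic (p : ℕ) (R : Type) [CommRing R] {M : Type} [AddCommGroup M] [Module R M]
    (F : M →+ M) (s : ℚ) : Prop :=
  ∃ (a : ℤ) (b : ℕ), 0 < b ∧ s = (a : ℚ) / (b : ℚ) ∧
    ∃ N : Submodule R M, Module.Finite R N ∧ Module.Free R N ∧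
      (∃ c : ℕ, ∀ m : M, (p : R) ^ c • m ∈ N) ∧
      ∃ (a₁ a₂ : ℕ), (a₂ : ℤ) - (a₁ : ℤ) = a ∧
        (p : R) ^ a₁ • Submodule.span R ((⇑F)^[b] '' (N : Set M)) = (p : R) ^ a₂ • N

/-- The subquotient `B/A` (with Frobenius induced by `F`) is isoclinic of slope `s`. -/
def IsIsoclinicSubquotient (p : ℕ) (R : Type) [CommRing R] {M : Type} [AddCommGroup M]
    [Module R M] (F : M →+ M) (A B : Submodule R M) (s : ℚ) : Prop :=
  ∃ (a : ℤ) (b : ℕ), 0 < b ∧ s = (a : ℚ) / (b : ℚ) ∧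
    ∃ N : Submodule R M, A ≤ N ∧ N ≤ B ∧
      (∃ c : ℕ, ∀ m ∈ B, (p : R) ^ c • m ∈ N) ∧
      ∃ (a₁ a₂ : ℕ), (a₂ : ℤ) - (a₁ : ℤ) = a ∧
        ((p : R) ^ a₁ • Submodule.span R ((⇑F)^[b] '' (N : Set M))) ⊔ A
          = ((p : R) ^ a₂ • N) ⊔ A

/-- Ascending slope filtration: `F`-stable submodules with torsion-free quotients,
nonzero isoclinic graded pieces, and strictly increasing slopes. -/
def IsAscendingSlopeFiltration (p : ℕ) (R : Type) [CommRing R] {M : Type} [AddCommGroup M]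
    [Module R M] (F : M →+ M) (n : ℕ) (ℓ : Fin n → ℚ)
    (Mf : Fin (n + 1) → Submodule R M) : Prop :=
  Mf 0 = ⊥ ∧ Mf (Fin.last n) = ⊤ ∧ Monotone Mf ∧
  (∀ i, ∀ m ∈ Mf i, F m ∈ Mf i) ∧
  (∀ i, ∀ x : R, x ≠ 0 → ∀ m : M, x • m ∈ Mf i → m ∈ Mf i) ∧
  (∀ i : Fin n, Mf i.castSucc < Mf i.succ) ∧
  (∀ i : Fin n, IsIsoclinicSubquotient p R F (Mf i.castSucc) (Mf i.succ) (ℓ i)) ∧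
  StrictMono ℓ

/-- The coefficientwise Frobenius/`t ↦ t^p` substitution endomorphism of `Ω = W(k)[[t]]`. -/
noncomputable def sigmaOmegaFun (p : ℕ) [Fact p.Prime] (k : Type) [CommRing k]
    (f : PowerSeries (WittVector p k)) : PowerSeries (WittVector p k) :=
  PowerSeries.mk fun m =>
    if p ∣ m then WittVector.frobenius ((PowerSeries.coeff (m / p)) f) else 0

/-- `Γ` (together with the embedding `ιΩ` of `Ω = W(k)[[t]]` and the residue map
`ρ` onto `k((t))`) is the `p`-adic completion of `Ω[t⁻¹]`: a `p`-adically complete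
and separated domain in which `t` is invertible, with residue field `k((t))`
(compatibly with reduction of coefficients on `Ω`), and in which `Ω[t⁻¹]` is dense. -/
def IsGamma (p : ℕ) [Fact p.Prime] (k : Type) [Field k] (Γ : Type) [CommRing Γ]
    (ιΩ : PowerSeries (WittVector p k) →+* Γ) (ρ : Γ →+* LaurentSeries k) : Prop :=
  IsDomain Γ ∧
  Function.Injective ιΩ ∧
  IsUnit (ιΩ PowerSeries.X) ∧
  IsAdicComplete (Ideal.span {(p : Γ)}) Γ ∧
  Function.Surjective ρ ∧
  RingHom.ker ρ = Ideal.span {(p : Γ)} ∧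
  (∀ a : WittVector p k, ρ (ιΩ (PowerSeries.C a)) = HahnSeries.C (a.coeff 0)) ∧
  ρ (ιΩ PowerSeries.X) = HahnSeries.single (1 : ℤ) (1 : k) ∧
  ∀ x : Γ, ∀ n : ℕ, ∃ (f : PowerSeries (WittVector p k)) (m : ℕ),
    x * ιΩ PowerSeries.X ^ m - ιΩ f ∈ Ideal.span {(p : Γ)} ^ n

/-- `σ` is the standard Frobenius lift on `Γ`: it is compatible via `ιΩ` with the
endomorphism of `Ω` acting as the Witt vector Frobenius on coefficients and sending
`t` to `t^p`. -/
def IsStandardFrobeniusLift (p : ℕ) [Fact p.Prime] (k : Type) [Field k] (Γ : Type)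
    [CommRing Γ] (ιΩ : PowerSeries (WittVector p k) →+* Γ) (σ : Γ →+* Γ) : Prop :=
  ∀ f, σ (ιΩ f) = ιΩ (sigmaOmegaFun p k f)

/-- Nonexistence of Frobenius eigenvectors in `Γ` with non-unit
eigenvalue.  If `x ∈ Γ` is nonzero and `λ ∈ O = W(k)` satisfies `σ(x) = λ·x`,
then `λ` is a unit in `O`. -/
theorem isUnit_eigenvalue_of_frobenius_eigenvector_in_Gamma
    (p : ℕ) [Fact p.Prime] (k : Type) [Field k] [IsAlgClosed k] [CharP k p]
    (Γ : Type) [CommRing Γ]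
    (ιΩ : PowerSeries (WittVector p k) →+* Γ) (ρ : Γ →+* LaurentSeries k)
    (hΓ : IsGamma p k Γ ιΩ ρ)
    (σ : Γ →+* Γ) (hσ : IsStandardFrobeniusLift p k Γ ιΩ σ)
    (x : Γ) (hx : x ≠ 0) (lam : WittVector p k)
    (heq : σ x = ιΩ (PowerSeries.C lam) * x) :
    IsUnit lam := by
  classical
  obtain ⟨hdom, -, -, hcomplete, hsurj, hker, hC, -, -⟩ := hΓ
  haveI : IsDomain Γ := hdom
  by_contra hlam
  have hlam0 : lam.coeff 0 = 0 := by
    by_contra h; exact hlam (WittVector.isUnit_of_coeff_zero_ne_zero lam h)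
  have hρC : ρ (ιΩ (PowerSeries.C lam)) = 0 := by
    rw [hC lam, hlam0, map_zero]
  have hexists : ∃ n : ℕ, ¬ (p : Γ) ^ n ∣ x := by
    by_contra h
    push_neg at h
    refine hx (IsHausdorff.haus (hcomplete.toIsHausdorff) x fun n => ?_)
    rw [SModEq.zero, smul_eq_mul, Ideal.mul_top, Ideal.span_singleton_pow,
      Ideal.mem_span_singleton]
    exact h n
  set n₀ := Nat.find hexists with hn₀
  have hn₀pos : n₀ ≠ 0 := by
    intro h
    have := Nat.find_spec hexists
    rw [← hn₀, h, pow_zero] at this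
    exact this (one_dvd x)
  set m := n₀ - 1 with hm
  have hdvd : (p : Γ) ^ m ∣ x := by
    by_contra h
    have h2 : n₀ ≤ m := hn₀ ▸ Nat.find_le h
    omega
  have hnot : ¬ (p : Γ) ^ (m + 1) ∣ x := by
    have : m + 1 = n₀ := by omega
    rw [this]
    exact Nat.find_spec hexists
  obtain ⟨y, hy⟩ := hdvd
  have hpy : ¬ (p : Γ) ∣ y := by
    rintro ⟨z, hz⟩
    exact hnot ⟨z, by rw [hy, hz]; ring⟩
  have hpm0 : (p : Γ) ^ m ≠ 0 := by
    intro h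
    exact hx (by rw [hy, h, zero_mul])
  have hσy : σ y = ιΩ (PowerSeries.C lam) * y := by
    refine mul_left_cancel₀ hpm0 ?_
    have h1 : (p : Γ) ^ m * σ y = σ ((p : Γ) ^ m * y) := by
      rw [map_mul, map_pow, map_natCast]
    rw [h1, ← hy, heq, hy]; ring
  have hkermax : (RingHom.ker ρ).IsMaximal := RingHom.ker_isMaximal_of_surjective ρ hsurj
  have hprime : (RingHom.ker (ρ.comp σ)).IsPrime := RingHom.ker_isPrime _
  have hle : RingHom.ker ρ ≤ RingHom.ker (ρ.comp σ) := by
    intro z hz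
    rw [hker, Ideal.mem_span_singleton] at hz
    obtain ⟨c, rfl⟩ := hz
    have h2 : ρ (σ ((p : Γ) * c)) = ρ (p : Γ) * ρ (σ c) := by
      rw [map_mul, map_mul, map_natCast, map_natCast]
    have hρp : ρ (p : Γ) = 0 := by
      have : (p : Γ) ∈ RingHom.ker ρ := by
        rw [hker]; exact Ideal.mem_span_singleton.mpr dvd_rfl
      exact this
    simp only [RingHom.mem_ker, RingHom.comp_apply]
    rw [h2, hρp, zero_mul]
  have hkereq : RingHom.ker ρ = RingHom.ker (ρ.comp σ) :=
    hkermax.eq_of_le hprime.ne_top hle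
  have hymem : y ∈ RingHom.ker (ρ.comp σ) := by
    simp only [RingHom.mem_ker, RingHom.comp_apply]
    rw [hσy, map_mul, hρC, zero_mul]
  rw [← hkereq, hker, Ideal.mem_span_singleton] at hymem
  exact hpy hymem
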